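/- (Key induction of the proof of Theorem 1: layer-wise contraction.) Suppose given nonnegative real numbers M_{k,n} for all integers k ≥ 1 and 0 ≤ n ≤ N, such that M_{k,0} = M_{k,N} = 0 for all k, and such that for all k ≥ 1 and all 1 ≤ n ≤ N−1: M_{k+1,n} ≤ (μ̄_n·M_{k+1,n−1} + γ_{n+1}·λ·M_{k,n+1})/(λ + μ̲_n). Then for all k ≥ 1 and all 1 ≤ n ≤ N−1: M_{k+1,n} ≤ Φ_n·max_{0≤j≤N} M_{k,j}. -/

import Mathlib

open Finset

/-- The contraction factors `Φ_n` built from the layer bounds `μ̲` (`mlow`) and `μ̄` (`mbar`);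
for `n = 1` the sum below is empty, recovering `Φ_1 = (λ/(λ+μ̲_1))·γ_2`. -/
noncomputable def PhiA (lam : ℝ) (mlow mbar : ℕ → ℝ) (n : ℕ) : ℝ :=
  (lam / (lam + mlow n)) *
    ((∑ q ∈ Finset.Icc 2 n, (mbar q / mlow q) *
        ∏ j ∈ Finset.Icc q n, mbar j / (lam + mlow (j - 1))) +
      mbar (n + 1) / mlow (n + 1))

lemma PhiA_succ (lam : ℝ) (mlow mbar : ℕ → ℝ) (m : ℕ) (hm : 1 ≤ m) :
    PhiA lam mlow mbar (m + 1) =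
      (mbar (m + 1) * PhiA lam mlow mbar m + lam * (mbar (m + 2) / mlow (m + 2))) /
        (lam + mlow (m + 1)) := by
  unfold PhiA
  rw [Finset.sum_Icc_succ_top (by omega : 2 ≤ m + 1)]
  have hprod : ∀ q ∈ Finset.Icc 2 m,
      (mbar q / mlow q) * ∏ j ∈ Finset.Icc q (m+1), mbar j / (lam + mlow (j-1)) =
      ((mbar q / mlow q) * ∏ j ∈ Finset.Icc q m, mbar j / (lam + mlow (j-1))) *
        (mbar (m+1) / (lam + mlow m)) := by
    intro q hq
    simp only [Finset.mem_Icc] at hq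
    rw [Finset.prod_Icc_succ_top (by omega : q ≤ m + 1)]
    simp only [Nat.add_sub_cancel]
    ring
  rw [Finset.sum_congr rfl hprod, ← Finset.sum_mul, Finset.Icc_self, Finset.prod_singleton]
  simp only [Nat.add_sub_cancel]
  ring


/-- Key induction in the proof of Theorem 1: layer-wise contraction. -/
theorem layerwise_contraction (N : ℕ) (hN : 2 ≤ N) (lam : ℝ) (hlam : 0 < lam)
    (mlow mbar : ℕ → ℝ)
    (hpos : ∀ n, 1 ≤ n → n ≤ N → 0 < mlow n)
    (hle : ∀ n, 1 ≤ n → n ≤ N → mlow n ≤ mbar n)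
    (M : ℕ → ℕ → ℝ)
    (hMnonneg : ∀ k, 1 ≤ k → ∀ n ≤ N, 0 ≤ M k n)
    (hM0 : ∀ k, 1 ≤ k → M k 0 = 0)
    (hMN : ∀ k, 1 ≤ k → M k N = 0)
    (hrec : ∀ k, 1 ≤ k → ∀ n, 1 ≤ n → n ≤ N - 1 →
      M (k + 1) n ≤
        (mbar n * M (k + 1) (n - 1) + (mbar (n + 1) / mlow (n + 1)) * lam * M k (n + 1)) /
          (lam + mlow n)) :
    ∀ k, 1 ≤ k → ∀ n, 1 ≤ n → n ≤ N - 1 →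
      M (k + 1) n ≤
        PhiA lam mlow mbar n *
          (Finset.range (N + 1)).sup' Finset.nonempty_range_add_one (M k) := by
  intro k hk
  set S := (Finset.range (N + 1)).sup' Finset.nonempty_range_add_one (M k) with hSdef
  have hSle : ∀ j, j ≤ N → M k j ≤ S := by
    intro j hj
    exact Finset.le_sup' (M k) (Finset.mem_range.mpr (by omega))
  have hS0 : 0 ≤ S := (hM0 k hk) ▸ hSle 0 (by omega)
  intro n
  induction n with
  | zero => omega
  | succ m ih =>
    intro _ hle'
    have hmbarpos : ∀ j, 1 ≤ j → j ≤ N → 0 < mbar j := fun j h1 h2 =>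
      lt_of_lt_of_le (hpos j h1 h2) (hle j h1 h2)
    have hdenpos : 0 < lam + mlow (m + 1) := by
      have := hpos (m + 1) (by omega) (by omega)
      linarith
    have hrec' := hrec k hk (m + 1) (by omega) hle'
    simp only [Nat.add_sub_cancel] at hrec'
    have hcnn : 0 ≤ (mbar (m + 2) / mlow (m + 2)) * lam := by
      have h1 := hpos (m + 2) (by omega) (by omega)
      have h2 := hmbarpos (m + 2) (by omega) (by omega)
      positivity
    have hMk : (mbar (m + 2) / mlow (m + 2)) * lam * M k (m + 2) ≤
        (mbar (m + 2) / mlow (m + 2)) * lam * S :=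
      mul_le_mul_of_nonneg_left (hSle (m + 2) (by omega)) hcnn
    rcases Nat.eq_zero_or_pos m with hm | hm
    · subst hm
      rw [hM0 (k + 1) (by omega)] at hrec'
      have hstep : M (k + 1) (0 + 1) ≤
          (mbar (0 + 1) * 0 + (mbar (0 + 2) / mlow (0 + 2)) * lam * S) /
            (lam + mlow (0 + 1)) := by
        refine hrec'.trans ?_
        gcongr
      refine hstep.trans (le_of_eq ?_)
      show _ = PhiA lam mlow mbar 1 * S
      unfold PhiA
      rw [Finset.Icc_eq_empty (by omega), Finset.sum_empty]
      norm_num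
      ring
    · have ih' := ih (by omega) (by omega)
      have hb : 0 ≤ mbar (m + 1) := (hmbarpos (m + 1) (by omega) (by omega)).le
      have hstep : M (k + 1) (m + 1) ≤
          (mbar (m + 1) * (PhiA lam mlow mbar m * S) +
            (mbar (m + 2) / mlow (m + 2)) * lam * S) / (lam + mlow (m + 1)) := by
        refine hrec'.trans ?_
        gcongr
      refine hstep.trans (le_of_eq ?_)
      rw [PhiA_succ lam mlow mbar m hm]
      ring
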